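/- In the graph C_{3k+1} (vertices (Z/2)^{3k+1}, adjacency meaning Hamming distance at least 2k+1), every set of three pairwise nonadjacent vertices has a common neighbor. -/

import Mathlib

/-- The graph `C_{3k+1}`: vertices are vectors in `(Z/2)^{3k+1}`,
adjacent iff their Hamming distance is at least `2k+1`. -/
def hypercubeGraph (k : ℕ) : SimpleGraph (Fin (3 * k + 1) → ZMod 2) where
  Adj x y := 2 * k + 1 ≤ hammingDist x y
  symm := ⟨by intro x y (h : 2 * k + 1 ≤ hammingDist x y); show 2 * k + 1 ≤ hammingDist y x; rwa [hammingDist_comm]⟩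
  loopless := ⟨by intro x (h : 2 * k + 1 ≤ hammingDist x x); rw [hammingDist_self] at h; omega⟩

theorem stmt_2 (k : ℕ) (hk : 0 < k) (x y z : Fin (3 * k + 1) → ZMod 2)
    (hxy : x ≠ y) (hxz : x ≠ z) (hyz : y ≠ z)
    (nxy : ¬ (hypercubeGraph k).Adj x y)
    (nxz : ¬ (hypercubeGraph k).Adj x z)
    (nyz : ¬ (hypercubeGraph k).Adj y z) :
    ∃ v, (hypercubeGraph k).Adj v x ∧ (hypercubeGraph k).Adj v y ∧
      (hypercubeGraph k).Adj v z := by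
  classical
  simp only [hypercubeGraph, not_le] at nxy nxz nyz ⊢
  set Sx : Finset (Fin (3 * k + 1)) := Finset.univ.filter fun i => y i = z i ∧ x i ≠ y i with hSx
  set Sy : Finset (Fin (3 * k + 1)) := Finset.univ.filter fun i => x i = z i ∧ x i ≠ y i with hSy
  set Sz : Finset (Fin (3 * k + 1)) := Finset.univ.filter fun i => x i = y i ∧ x i ≠ z i with hSz
  set T : Finset (Fin (3 * k + 1)) := Finset.univ.filter fun i => x i = y i ∧ y i = z i with hT
  have mSx : ∀ i, i ∈ Sx ↔ (y i = z i ∧ x i ≠ y i) := by intro i; simp [hSx]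
  have mSy : ∀ i, i ∈ Sy ↔ (x i = z i ∧ x i ≠ y i) := by intro i; simp [hSy]
  have mSz : ∀ i, i ∈ Sz ↔ (x i = y i ∧ x i ≠ z i) := by intro i; simp [hSz]
  have mT : ∀ i, i ∈ T ↔ (x i = y i ∧ y i = z i) := by intro i; simp [hT]
  -- pairwise disjointness (pointwise)
  have dxy : ∀ i, i ∈ Sx → i ∉ Sy := by
    intro i; rw [mSx i, mSy i]
    generalize x i = u; generalize y i = v; generalize z i = w
    revert u v w; decide
  have dxz : ∀ i, i ∈ Sx → i ∉ Sz := by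
    intro i; rw [mSx i, mSz i]
    generalize x i = u; generalize y i = v; generalize z i = w
    revert u v w; decide
  have dyz : ∀ i, i ∈ Sy → i ∉ Sz := by
    intro i; rw [mSy i, mSz i]
    generalize x i = u; generalize y i = v; generalize z i = w
    revert u v w; decide
  have dxT : ∀ i, i ∈ Sx → i ∉ T := by
    intro i; rw [mSx i, mT i]
    generalize x i = u; generalize y i = v; generalize z i = w
    revert u v w; decide
  have dyT : ∀ i, i ∈ Sy → i ∉ T := by
    intro i; rw [mSy i, mT i]
    generalize x i = u; generalize y i = v; generalize z i = w
    revert u v w; decide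
  have dzT : ∀ i, i ∈ Sz → i ∉ T := by
    intro i; rw [mSz i, mT i]
    generalize x i = u; generalize y i = v; generalize z i = w
    revert u v w; decide
  -- cover
  have cover : ∀ i, i ∈ Sx ∨ i ∈ Sy ∨ i ∈ Sz ∨ i ∈ T := by
    intro i; rw [mSx i, mSy i, mSz i, mT i]
    generalize x i = u; generalize y i = v; generalize z i = w
    revert u v w; decide
  -- abbreviations for cardinalities
  set a := Sx.card with ha
  set b := Sy.card with hb
  set c := Sz.card with hc
  set t := T.card with ht
  -- distances
  have hdxy : hammingDist x y = a + b := by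
    have : (Finset.univ.filter fun i => x i ≠ y i) = Sx ∪ Sy := by
      ext i
      simp only [Finset.mem_filter, Finset.mem_univ, true_and, Finset.mem_union, mSx i, mSy i]
      generalize x i = u; generalize y i = v; generalize z i = w
      revert u v w; decide
    rw [hammingDist, this, Finset.card_union_of_disjoint (Finset.disjoint_left.mpr (dxy ·))]
  have hdxz : hammingDist x z = a + c := by
    have : (Finset.univ.filter fun i => x i ≠ z i) = Sx ∪ Sz := by
      ext i
      simp only [Finset.mem_filter, Finset.mem_univ, true_and, Finset.mem_union, mSx i, mSz i]
      generalize x i = u; generalize y i = v; generalize z i = w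
      revert u v w; decide
    rw [hammingDist, this, Finset.card_union_of_disjoint (Finset.disjoint_left.mpr (dxz ·))]
  have hdyz : hammingDist y z = b + c := by
    have : (Finset.univ.filter fun i => y i ≠ z i) = Sy ∪ Sz := by
      ext i
      simp only [Finset.mem_filter, Finset.mem_univ, true_and, Finset.mem_union, mSy i, mSz i]
      generalize x i = u; generalize y i = v; generalize z i = w
      revert u v w; decide
    rw [hammingDist, this, Finset.card_union_of_disjoint (Finset.disjoint_left.mpr (dyz ·))]
  -- partition of the universe
  have hpart : a + b + c + t = 3 * k + 1 := by
    have huniv : (Finset.univ : Finset (Fin (3 * k + 1))) = (Sx ∪ Sy) ∪ (Sz ∪ T) := by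
      ext i
      simp only [Finset.mem_univ, Finset.mem_union, true_iff]
      rcases cover i with h | h | h | h <;> tauto
    have d1 : Disjoint Sx Sy := Finset.disjoint_left.mpr (dxy ·)
    have d2 : Disjoint Sz T := Finset.disjoint_left.mpr (dzT ·)
    have d3 : Disjoint (Sx ∪ Sy) (Sz ∪ T) := by
      rw [Finset.disjoint_union_left, Finset.disjoint_union_right, Finset.disjoint_union_right]
      refine ⟨⟨Finset.disjoint_left.mpr (dxz ·), Finset.disjoint_left.mpr (dxT ·)⟩,
        ⟨Finset.disjoint_left.mpr (dyz ·), Finset.disjoint_left.mpr (dyT ·)⟩⟩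
    have h0 : (Finset.univ : Finset (Fin (3 * k + 1))).card = 3 * k + 1 := by simp
    rw [huniv, Finset.card_union_of_disjoint d3, Finset.card_union_of_disjoint d1,
      Finset.card_union_of_disjoint d2] at h0
    omega
  -- choose flip sets
  obtain ⟨Fx, hFxs, hFxc⟩ := Finset.exists_subset_card_eq
    (show a - k ≤ Sx.card by rw [← ha]; exact Nat.sub_le a k)
  obtain ⟨Fy, hFys, hFyc⟩ := Finset.exists_subset_card_eq
    (show b - k ≤ Sy.card by rw [← hb]; exact Nat.sub_le b k)
  obtain ⟨Fz, hFzs, hFzc⟩ := Finset.exists_subset_card_eq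
    (show c - k ≤ Sz.card by rw [← hc]; exact Nat.sub_le c k)
  set v : Fin (3 * k + 1) → ZMod 2 := fun i =>
    if i ∈ Fx then y i else if i ∈ Fy then x i else if i ∈ Fz then x i
    else if i ∈ Sx then x i else if i ∈ Sy then y i else if i ∈ Sz then z i
    else x i + 1 with hv
  -- evaluation of v on each region
  have hvFx : ∀ i ∈ Fx, v i = y i := by intro i hi; simp [hv, hi]
  have hvFy : ∀ i ∈ Fy, v i = x i := by
    intro i hi
    have h1 : i ∉ Fx := fun h => dxy i (hFxs h) (hFys hi)
    simp [hv, hi, h1]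
  have hvFz : ∀ i ∈ Fz, v i = x i := by
    intro i hi
    have h1 : i ∉ Fx := fun h => dxz i (hFxs h) (hFzs hi)
    have h2 : i ∉ Fy := fun h => dyz i (hFys h) (hFzs hi)
    simp [hv, hi, h1, h2]
  have hvSx : ∀ i ∈ Sx, i ∉ Fx → v i = x i := by
    intro i hi hf
    have h1 : i ∉ Fy := fun h => dxy i hi (hFys h)
    have h2 : i ∉ Fz := fun h => dxz i hi (hFzs h)
    simp [hv, hi, hf, h1, h2]
  have hvSy : ∀ i ∈ Sy, i ∉ Fy → v i = y i := by
    intro i hi hf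
    have h1 : i ∉ Fx := fun h => dxy i (hFxs h) hi
    have h2 : i ∉ Fz := fun h => dyz i hi (hFzs h)
    have h3 : i ∉ Sx := fun h => dxy i h hi
    simp [hv, hi, hf, h1, h2, h3]
  have hvSz : ∀ i ∈ Sz, i ∉ Fz → v i = z i := by
    intro i hi hf
    have h1 : i ∉ Fx := fun h => dxz i (hFxs h) hi
    have h2 : i ∉ Fy := fun h => dyz i (hFys h) hi
    have h3 : i ∉ Sx := fun h => dxz i h hi
    have h4 : i ∉ Sy := fun h => dyz i h hi
    simp [hv, hi, hf, h1, h2, h3, h4]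
  have hvT : ∀ i ∈ T, v i = x i + 1 := by
    intro i hi
    have h3 : i ∉ Sx := fun h => dxT i h hi
    have h4 : i ∉ Sy := fun h => dyT i h hi
    have h5 : i ∉ Sz := fun h => dzT i h hi
    have h1 : i ∉ Fx := fun h => h3 (hFxs h)
    have h2 : i ∉ Fy := fun h => h4 (hFys h)
    have h6 : i ∉ Fz := fun h => h5 (hFzs h)
    simp [hv, h1, h2, h3, h4, h5, h6]
  have zadd : ∀ u : ZMod 2, u + 1 ≠ u := by decide
  -- the three difference sets
  have key : ∀ i, ((v i ≠ x i) ↔ i ∈ (T ∪ Fx) ∪ ((Sy \ Fy) ∪ (Sz \ Fz)))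
      ∧ ((v i ≠ y i) ↔ i ∈ (T ∪ Fy) ∪ ((Sx \ Fx) ∪ (Sz \ Fz)))
      ∧ ((v i ≠ z i) ↔ i ∈ (T ∪ Fz) ∪ ((Sx \ Fx) ∪ (Sy \ Fy))) := by
    intro i
    simp only [Finset.mem_union, Finset.mem_sdiff]
    rcases cover i with h | h | h | h
    · obtain ⟨e2, e1⟩ := (mSx i).mp h
      have hTn : i ∉ T := dxT i h
      have hyn : i ∉ Sy := dxy i h
      have hzn : i ∉ Sz := dxz i h
      have hFyn : i ∉ Fy := fun hf => hyn (hFys hf)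
      have hFzn : i ∉ Fz := fun hf => hzn (hFzs hf)
      by_cases hf : i ∈ Fx
      · rw [hvFx i hf]
        refine ⟨iff_of_true (Ne.symm e1) (Or.inl (Or.inr hf)), ?_, ?_⟩
        · exact iff_of_false (fun h' => h' rfl) (by simp [hTn, hFyn, hf, hzn])
        · exact iff_of_false (fun h' => h' e2) (by simp [hTn, hFzn, hf, hyn])
      · rw [hvSx i h hf]
        refine ⟨?_, iff_of_true e1 (Or.inr (Or.inl ⟨h, hf⟩)),
          iff_of_true (e2 ▸ e1) (Or.inr (Or.inl ⟨h, hf⟩))⟩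
        · exact iff_of_false (fun h' => h' rfl) (by simp [hTn, hf, hyn, hzn])
    · obtain ⟨e1, e2⟩ := (mSy i).mp h
      have hTn : i ∉ T := dyT i h
      have hxn : i ∉ Sx := fun h' => dxy i h' h
      have hzn : i ∉ Sz := dyz i h
      have hFxn : i ∉ Fx := fun hf => hxn (hFxs hf)
      have hFzn : i ∉ Fz := fun hf => hzn (hFzs hf)
      by_cases hf : i ∈ Fy
      · rw [hvFy i hf]
        refine ⟨?_, iff_of_true e2 (Or.inl (Or.inr hf)), ?_⟩
        · exact iff_of_false (fun h' => h' rfl) (by simp [hTn, hFxn, hf, hzn])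
        · exact iff_of_false (fun h' => h' e1) (by simp [hTn, hFzn, hxn, hf])
      · rw [hvSy i h hf]
        refine ⟨iff_of_true (Ne.symm e2) (Or.inr (Or.inl ⟨h, hf⟩)), ?_,
          iff_of_true (fun hc => e2 (e1.trans hc.symm)) (Or.inr (Or.inr ⟨h, hf⟩))⟩
        · exact iff_of_false (fun h' => h' rfl) (by simp [hTn, hf, hxn, hzn])
    · obtain ⟨e1, e2⟩ := (mSz i).mp h
      have hTn : i ∉ T := dzT i h
      have hxn : i ∉ Sx := fun h' => dxz i h' h
      have hyn : i ∉ Sy := fun h' => dyz i h' h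
      have hFxn : i ∉ Fx := fun hf => hxn (hFxs hf)
      have hFyn : i ∉ Fy := fun hf => hyn (hFys hf)
      by_cases hf : i ∈ Fz
      · rw [hvFz i hf]
        refine ⟨?_, ?_, iff_of_true e2 (Or.inl (Or.inr hf))⟩
        · exact iff_of_false (fun h' => h' rfl) (by simp [hTn, hFxn, hyn, hf])
        · exact iff_of_false (fun h' => h' e1) (by simp [hTn, hFyn, hxn, hf])
      · rw [hvSz i h hf]
        refine ⟨iff_of_true (fun hc => e2 hc.symm) (Or.inr (Or.inr ⟨h, hf⟩)),
          iff_of_true (fun hc => e2 (e1.symm ▸ hc.symm : x i = z i)) (Or.inr (Or.inr ⟨h, hf⟩)), ?_⟩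
        · exact iff_of_false (fun h' => h' rfl) (by simp [hTn, hf, hxn, hyn])
    · obtain ⟨e1, e2⟩ := (mT i).mp h
      rw [hvT i h]
      refine ⟨iff_of_true (zadd _) (Or.inl (Or.inl h)),
        iff_of_true (by rw [e1]; exact zadd _) (Or.inl (Or.inl h)),
        iff_of_true (by rw [e1, e2]; exact zadd _) (Or.inl (Or.inl h))⟩
  -- cardinalities of the flip/remainder pieces
  have cFx : Fx.card = a - k := hFxc
  have cFy : Fy.card = b - k := hFyc
  have cFz : Fz.card = c - k := hFzc
  have cSxF : (Sx \ Fx).card = a - (a - k) := by rw [Finset.card_sdiff_of_subset hFxs, cFx, ← ha]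
  have cSyF : (Sy \ Fy).card = b - (b - k) := by rw [Finset.card_sdiff_of_subset hFys, cFy, ← hb]
  have cSzF : (Sz \ Fz).card = c - (c - k) := by rw [Finset.card_sdiff_of_subset hFzs, cFz, ← hc]
  -- disjointness helpers
  have dj : ∀ (P Q : Finset (Fin (3 * k + 1))), (∀ i, i ∈ P → i ∉ Q) → Disjoint P Q :=
    fun P Q h => Finset.disjoint_left.mpr fun {i} hi => h i hi
  have cardU : ∀ (A B C D : Finset (Fin (3 * k + 1))), Disjoint A B → Disjoint C D →
      Disjoint (A ∪ B) (C ∪ D) → ((A ∪ B) ∪ (C ∪ D)).card = A.card + B.card + C.card + D.card := by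
    intro A B C D h1 h2 h3
    rw [Finset.card_union_of_disjoint h3, Finset.card_union_of_disjoint h1,
      Finset.card_union_of_disjoint h2]
    ring
  refine ⟨v, ?_, ?_, ?_⟩
  · show 2 * k + 1 ≤ hammingDist v x
    have hDx : (Finset.univ.filter fun i => v i ≠ x i) = (T ∪ Fx) ∪ ((Sy \ Fy) ∪ (Sz \ Fz)) := by
      ext i
      simp only [Finset.mem_filter, Finset.mem_univ, true_and]
      exact (key i).1
    have hcard : hammingDist v x = t + (a - k) + (b - (b - k)) + (c - (c - k)) := by
      rw [hammingDist, hDx, cardU _ _ _ _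
        (dj _ _ fun i hi hf => dxT i (hFxs hf) hi)
        (dj _ _ fun i hi hf => dyz i (Finset.mem_sdiff.mp hi).1 (Finset.mem_sdiff.mp hf).1)
        (dj _ _ ?_), cFx, cSyF, cSzF, ht]
      intro i hi
      rcases Finset.mem_union.mp hi with hT' | hF'
      · simp only [Finset.mem_union, Finset.mem_sdiff, not_or]
        exact ⟨fun h' => dyT i h'.1 hT', fun h' => dzT i h'.1 hT'⟩
      · simp only [Finset.mem_union, Finset.mem_sdiff, not_or]
        exact ⟨fun h' => dxy i (hFxs hF') h'.1, fun h' => dxz i (hFxs hF') h'.1⟩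
    omega
  · show 2 * k + 1 ≤ hammingDist v y
    have hDy : (Finset.univ.filter fun i => v i ≠ y i) = (T ∪ Fy) ∪ ((Sx \ Fx) ∪ (Sz \ Fz)) := by
      ext i
      simp only [Finset.mem_filter, Finset.mem_univ, true_and]
      exact (key i).2.1
    have hcard : hammingDist v y = t + (b - k) + (a - (a - k)) + (c - (c - k)) := by
      rw [hammingDist, hDy, cardU _ _ _ _
        (dj _ _ fun i hi hf => dyT i (hFys hf) hi)
        (dj _ _ fun i hi hf => dxz i (Finset.mem_sdiff.mp hi).1 (Finset.mem_sdiff.mp hf).1)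
        (dj _ _ ?_), cFy, cSxF, cSzF, ht]
      intro i hi
      rcases Finset.mem_union.mp hi with hT' | hF'
      · simp only [Finset.mem_union, Finset.mem_sdiff, not_or]
        exact ⟨fun h' => dxT i h'.1 hT', fun h' => dzT i h'.1 hT'⟩
      · simp only [Finset.mem_union, Finset.mem_sdiff, not_or]
        exact ⟨fun h' => dxy i h'.1 (hFys hF'), fun h' => dyz i (hFys hF') h'.1⟩
    omega
  · show 2 * k + 1 ≤ hammingDist v z
    have hDz : (Finset.univ.filter fun i => v i ≠ z i) = (T ∪ Fz) ∪ ((Sx \ Fx) ∪ (Sy \ Fy)) := by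
      ext i
      simp only [Finset.mem_filter, Finset.mem_univ, true_and]
      exact (key i).2.2
    have hcard : hammingDist v z = t + (c - k) + (a - (a - k)) + (b - (b - k)) := by
      rw [hammingDist, hDz, cardU _ _ _ _
        (dj _ _ fun i hi hf => dzT i (hFzs hf) hi)
        (dj _ _ fun i hi hf => dxy i (Finset.mem_sdiff.mp hi).1 (Finset.mem_sdiff.mp hf).1)
        (dj _ _ ?_), cFz, cSxF, cSyF, ht]
      intro i hi
      rcases Finset.mem_union.mp hi with hT' | hF'
      · simp only [Finset.mem_union, Finset.mem_sdiff, not_or]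
        exact ⟨fun h' => dxT i h'.1 hT', fun h' => dyT i h'.1 hT'⟩
      · simp only [Finset.mem_union, Finset.mem_sdiff, not_or]
        exact ⟨fun h' => dxz i h'.1 (hFzs hF'), fun h' => dyz i h'.1 (hFzs hF')⟩
    omega
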